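/- Let G be a finite bipartite graph, and let b ∈ B and w ∈ W be two nonadjacent vertices ({b, w} ∉ E). Then D(G) = Dom( D((B ∪ W) \ {b}) ∪ D((B ∪ W) \ {w}) ); that is, the maxbisize set of G equals the non-dominated pairs among the maxbisizes of G − b together with the maxbisizes of G − w. (The paper states and uses this for G the bipartite complement of a cycle, but the proof uses only the nonadjacency of b and w.) -/
import Mathlib


open Finset

/-- A finite bipartite graph: black vertices `B`, white vertices `W` (disjoint finite sets),
and an edge set `E ⊆ B × W`. -/
structure BipGraph (V : Type) [DecidableEq V] where
  B : Finset V
  W : Finset V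
  disj : Disjoint B W
  E : Set (V × V)
  E_sub : ∀ e ∈ E, e.1 ∈ B ∧ e.2 ∈ W

variable {V : Type} [DecidableEq V]

/-- `(S, T)` is a biclique of `G`. -/
def IsBiclique (G : BipGraph V) (S T : Finset V) : Prop :=
  S ⊆ G.B ∧ T ⊆ G.W ∧ ∀ b ∈ S, ∀ w ∈ T, (b, w) ∈ G.E

/-- `(b, w)` is a bisize of `G`: `G` contains a biclique of size `(b, w)`. -/
def Bisize (G : BipGraph V) (p : ℕ × ℕ) : Prop :=
  ∃ S T, IsBiclique G S T ∧ S.card = p.1 ∧ T.card = p.2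

/-- `Dominates p q` : `p` dominates `q`, i.e. `q.1 ≤ p.1` and `q.2 ≤ p.2`. -/
def Dominates (p q : ℕ × ℕ) : Prop := q.1 ≤ p.1 ∧ q.2 ≤ p.2

/-- A maxbisize of `G` : a bisize not strictly dominated by another bisize. -/
def MaxBisize (G : BipGraph V) (p : ℕ × ℕ) : Prop :=
  Bisize G p ∧ ∀ q, Bisize G q → Dominates q p → q = p

/-- `DD G` is the set of maxbisizes of `G` (denoted `D(G)` in the paper). -/
def DD (G : BipGraph V) : Set (ℕ × ℕ) := {p | MaxBisize G p}

/-- `Dom X` : the elements of `X` not strictly dominated by another element of `X`. -/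
def Dom (X : Set (ℕ × ℕ)) : Set (ℕ × ℕ) := {p ∈ X | ∀ q ∈ X, Dominates q p → q = p}

/-- The induced subgraph `G[M]`. -/
def induce (G : BipGraph V) (M : Finset V) : BipGraph V where
  B := G.B ∩ M
  W := G.W ∩ M
  disj := G.disj.mono inter_subset_left inter_subset_left
  E := {e ∈ G.E | e.1 ∈ M ∧ e.2 ∈ M}
  E_sub := fun e he =>
    ⟨mem_inter.mpr ⟨(G.E_sub e he.1).1, he.2.1⟩, mem_inter.mpr ⟨(G.E_sub e he.1).2, he.2.2⟩⟩

/-- `X` is nonadjacent to `Y` : no vertex of `X` is adjacent to a vertex of `Y`. -/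
def Nonadj (G : BipGraph V) (X Y : Finset V) : Prop :=
  ∀ x ∈ X, ∀ y ∈ Y, (x, y) ∉ G.E ∧ (y, x) ∉ G.E

/-- `X` is fully adjacent to `Y` : every black vertex of `X` is adjacent to every white
vertex of `Y` and every white vertex of `X` is adjacent to every black vertex of `Y`. -/
def FullyAdj (G : BipGraph V) (X Y : Finset V) : Prop :=
  (∀ b ∈ X ∩ G.B, ∀ w ∈ Y ∩ G.W, (b, w) ∈ G.E) ∧
  (∀ b ∈ Y ∩ G.B, ∀ w ∈ X ∩ G.W, (b, w) ∈ G.E)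

/-- `X` is left adjacent to `Y` : every black vertex of `X` is adjacent to every white
vertex of `Y` and no white vertex of `X` is adjacent to a black vertex of `Y`. -/
def LeftAdj (G : BipGraph V) (X Y : Finset V) : Prop :=
  (∀ b ∈ X ∩ G.B, ∀ w ∈ Y ∩ G.W, (b, w) ∈ G.E) ∧
  (∀ b ∈ Y ∩ G.B, ∀ w ∈ X ∩ G.W, (b, w) ∉ G.E)

open Classical in
/-- `X ⊕ Y` with the convention `∅ ⊕ X = X ⊕ ∅ = X`. -/
noncomputable def oplus (X Y : Set (ℕ × ℕ)) : Set (ℕ × ℕ) :=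
  if X = ∅ then Y else if Y = ∅ then X
  else {p | ∃ x ∈ X, ∃ y ∈ Y, p = x + y}

/-- `→_w^z X`. -/
def shiftW (z : ℕ) (X : Set (ℕ × ℕ)) : Set (ℕ × ℕ) := {p | ∃ q ∈ X, p = (q.1, q.2 + z)}

/-- `→_b^z X`. -/
def shiftB (z : ℕ) (X : Set (ℕ × ℕ)) : Set (ℕ × ℕ) := {p | ∃ q ∈ X, p = (q.1 + z, q.2)}

/-- A bimodule of `G`. -/
def Bimodule (G : BipGraph V) (M : Finset V) : Prop :=
  M ⊆ G.B ∪ G.W ∧ ∀ v ∈ (G.B ∪ G.W) \ M, Nonadj G {v} M ∨ FullyAdj G {v} M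

/-- The quotient graph of `G` by a family `M` of bimodules: vertex `(i, true)` is the
black vertex `bᵢ` (present when `Mᵢ ∩ B ≠ ∅`), `(i, false)` the white vertex `wᵢ`. -/
def quotientGraph (G : BipGraph V) {k : ℕ} (M : Fin k → Finset V) :
    BipGraph (Fin k × Bool) where
  B := Finset.univ.filter fun p => p.2 = true ∧ (M p.1 ∩ G.B).Nonempty
  W := Finset.univ.filter fun p => p.2 = false ∧ (M p.1 ∩ G.W).Nonempty
  disj := by
    rw [Finset.disjoint_left]
    intro p hp hq
    simp only [Finset.mem_filter, Finset.mem_univ, true_and] at hp hq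
    rw [hp.1] at hq
    exact Bool.noConfusion hq.1
  E := {e | e.1.2 = true ∧ e.2.2 = false ∧
       ∃ x ∈ M e.1.1 ∩ G.B, ∃ y ∈ M e.2.1 ∩ G.W, (x, y) ∈ G.E}
  E_sub := fun e he => by
    obtain ⟨h1, h2, x, hx, y, hy, _⟩ := he
    constructor <;> simp only [Finset.mem_filter, Finset.mem_univ, true_and]
    · exact ⟨h1, ⟨x, hx⟩⟩
    · exact ⟨h2, ⟨y, hy⟩⟩

/-- `Rroc S` for a set `S` of vertices of the quotient graph. -/
def Rroc (G : BipGraph V) {k : ℕ} (M : Fin k → Finset V)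
    (S : Finset (Fin k × Bool)) : Finset V :=
  S.biUnion fun p => if p.2 then M p.1 ∩ G.B else M p.1 ∩ G.W

/-- `Corr S` for a set `S` of vertices of `G`. -/
def Corr (G : BipGraph V) {k : ℕ} (M : Fin k → Finset V) (C : Finset V) :
    Finset (Fin k × Bool) :=
  Finset.univ.filter fun p =>
    if p.2 then (C ∩ M p.1 ∩ G.B).Nonempty else (C ∩ M p.1 ∩ G.W).Nonempty

/-- `C` is the vertex set of a biclique of `G`. -/
def IsBicliqueVS (G : BipGraph V) (C : Finset V) : Prop :=
  ∃ S T, IsBiclique G S T ∧ S ∪ T = C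

/-- `C` is the vertex set of a maximal biclique of `G`. -/
def MaximalBicliqueVS (G : BipGraph V) (C : Finset V) : Prop :=
  IsBicliqueVS G C ∧ ∀ D, IsBicliqueVS G D → C ⊆ D → C = D

/-- `D_C(Mᵢ)`, the maxbisize set of the bimodule `Mᵢ` with respect to a maximal
biclique `C` of the quotient graph. -/
def DC (G : BipGraph V) {k : ℕ} (M : Fin k → Finset V)
    (C : Finset (Fin k × Bool)) (i : Fin k) : Set (ℕ × ℕ) :=
  if (i, true) ∈ C then
    if (i, false) ∈ C then DD (induce G (M i))
    else {((M i ∩ G.B).card, 0)}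
  else
    if (i, false) ∈ C then {(0, (M i ∩ G.W).card)}
    else ∅

/-- `f 0 ⊕ f 1 ⊕ … ⊕ f (k-1)` (with the convention that `∅` is neutral for `⊕`). -/
noncomputable def oplusFold {k : ℕ} (f : Fin k → Set (ℕ × ℕ)) : Set (ℕ × ℕ) :=
  (List.finRange k).foldr (fun i acc => oplus (f i) acc) ∅

/-- The path on `n` vertices `0, 1, …, n-1`, two-colored alternately; the black
vertices are those whose index has parity `r`. -/
def pathGraph (n r : ℕ) : BipGraph (Fin n) where
  B := Finset.univ.filter fun i => (i : ℕ) % 2 = r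
  W := Finset.univ.filter fun i => (i : ℕ) % 2 ≠ r
  disj := by
    rw [Finset.disjoint_left]
    intro i hi hj
    simp only [Finset.mem_filter, Finset.mem_univ, true_and] at hi hj
    exact hj hi
  E := {e | (e.1 : ℕ) % 2 = r ∧ ((e.1 : ℕ) + 1 = (e.2 : ℕ) ∨ (e.2 : ℕ) + 1 = (e.1 : ℕ))}
  E_sub := fun e he => by
    obtain ⟨h1, h2⟩ := he
    refine ⟨?_, ?_⟩ <;> simp only [Finset.mem_filter, Finset.mem_univ, true_and]
    · exact h1
    · omega

/-- The cycle on `n` vertices `0, 1, …, n-1` (consecutive vertices modulo `n` adjacent),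
two-colored alternately; the black vertices are those whose index has parity `r`. -/
def cycleGraph (n r : ℕ) : BipGraph (Fin n) where
  B := Finset.univ.filter fun i => (i : ℕ) % 2 = r
  W := Finset.univ.filter fun i => (i : ℕ) % 2 ≠ r
  disj := by
    rw [Finset.disjoint_left]
    intro i hi hj
    simp only [Finset.mem_filter, Finset.mem_univ, true_and] at hi hj
    exact hj hi
  E := {e | (e.1 : ℕ) % 2 = r ∧ (e.2 : ℕ) % 2 ≠ r ∧
       (((e.1 : ℕ) + 1) % n = (e.2 : ℕ) ∨ ((e.2 : ℕ) + 1) % n = (e.1 : ℕ))}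
  E_sub := fun e he => by
    obtain ⟨h1, h2, _⟩ := he
    refine ⟨?_, ?_⟩ <;> simp only [Finset.mem_filter, Finset.mem_univ, true_and]
    · exact h1
    · exact h2

/-- The bipartite complement of `G`. -/
def bipCompl (G : BipGraph V) : BipGraph V where
  B := G.B
  W := G.W
  disj := G.disj
  E := {e | e.1 ∈ G.B ∧ e.2 ∈ G.W ∧ e ∉ G.E}
  E_sub := fun _ he => ⟨he.1, he.2.1⟩

/-- `x` and `y` are adjacent in `G`. -/
def Adjv (G : BipGraph V) (x y : V) : Prop := (x, y) ∈ G.E ∨ (y, x) ∈ G.E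

/-- `G` is twin-free: no two distinct vertices have the same set of neighbors. -/
def TwinFree (G : BipGraph V) : Prop :=
  ∀ x ∈ G.B ∪ G.W, ∀ y ∈ G.B ∪ G.W,
    ({z | Adjv G x z} = {z | Adjv G y z}) → x = y

/-- The edges of the skew star `Star_{1,2,3}`: a path `0-1-2-3-4-5` plus a vertex `6`
adjacent only to `2`. -/
def starEdges : List (ℕ × ℕ) := [(0, 1), (1, 2), (2, 3), (3, 4), (4, 5), (2, 6)]

/-- `G` contains no induced `Star_{1,2,3}`. -/
def Star123Free (G : BipGraph V) : Prop :=
  ¬ ∃ v : Fin 7 → V, Function.Injective v ∧ (∀ i, v i ∈ G.B ∪ G.W) ∧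
    ∀ i j : Fin 7, Adjv G (v i) (v j) ↔
      (((i : ℕ), (j : ℕ)) ∈ starEdges ∨ ((j : ℕ), (i : ℕ)) ∈ starEdges)

/-- Every vertex of `G` has degree at most 2 (equivalent to `K_{1,3}`-freeness for
bipartite graphs). -/
def MaxDeg2 (G : BipGraph V) : Prop :=
  ∀ x ∈ G.B ∪ G.W, ({y | Adjv G x y}).ncard ≤ 2
section AuxLemmas

variable {V : Type} [DecidableEq V]

lemma bisize_mono {G : BipGraph V} {p q : ℕ × ℕ} (hq : Bisize G q)
    (h1 : p.1 ≤ q.1) (h2 : p.2 ≤ q.2) : Bisize G p := by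
  obtain ⟨S, T, ⟨hSB, hTW, hE⟩, hS, hT⟩ := hq
  obtain ⟨S', hS'S, hS'⟩ := Finset.exists_subset_card_eq (show p.1 ≤ S.card by omega)
  obtain ⟨T', hT'T, hT'⟩ := Finset.exists_subset_card_eq (show p.2 ≤ T.card by omega)
  exact ⟨S', T', ⟨hS'S.trans hSB, hT'T.trans hTW,
    fun x hx y hy => hE x (hS'S hx) y (hT'T hy)⟩, hS', hT'⟩

lemma bisize_induce {G : BipGraph V} {M : Finset V} {p : ℕ × ℕ}
    (h : Bisize (induce G M) p) : Bisize G p := by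
  obtain ⟨S, T, ⟨hSB, hTW, hE⟩, hS, hT⟩ := h
  refine ⟨S, T, ⟨fun x hx => (Finset.mem_inter.mp (hSB hx)).1,
    fun x hx => (Finset.mem_inter.mp (hTW hx)).1,
    fun x hx y hy => (hE x hx y hy).1⟩, hS, hT⟩

lemma bisize_finite (G : BipGraph V) : {p : ℕ × ℕ | Bisize G p}.Finite := by
  apply Set.Finite.subset (((Set.finite_Iic G.B.card).prod (Set.finite_Iic G.W.card)))
  rintro ⟨x, y⟩ ⟨S, T, ⟨hSB, hTW, _⟩, hS, hT⟩
  have h1 := Finset.card_le_card hSB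
  have h2 := Finset.card_le_card hTW
  exact ⟨by simp only [Set.mem_Iic]; omega, by simp only [Set.mem_Iic]; omega⟩

lemma exists_maxbisize {G : BipGraph V} {q : ℕ × ℕ} (hq : Bisize G q) :
    ∃ m, MaxBisize G m ∧ q.1 ≤ m.1 ∧ q.2 ≤ m.2 := by
  obtain ⟨m, hqm, hm⟩ := (bisize_finite G).exists_le_maximal hq
  refine ⟨m, ⟨hm.1, fun r hr hdom => ?_⟩, hqm.1, hqm.2⟩
  have hle : m ≤ r := Prod.le_def.mpr ⟨hdom.1, hdom.2⟩
  have := hm.2 hr hle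
  exact le_antisymm this hle

lemma bisize_split {G : BipGraph V} {b w : V} (hb : b ∈ G.B) (hw : w ∈ G.W)
    (hbw : (b, w) ∉ G.E) {p : ℕ × ℕ} (hp : Bisize G p) :
    Bisize (induce G ((G.B ∪ G.W).erase b)) p ∨
    Bisize (induce G ((G.B ∪ G.W).erase w)) p := by
  obtain ⟨S, T, ⟨hSB, hTW, hE⟩, hS, hT⟩ := hp
  have key : b ∉ S ∨ w ∉ T := by
    by_contra h
    push_neg at h
    exact hbw (hE b h.1 w h.2)
  have mk : ∀ v : V, (v = b → v ∉ S ∪ T) →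
      Bisize (induce G ((G.B ∪ G.W).erase v)) p ∨ True := fun _ _ => Or.inr trivial
  -- build the biclique in the appropriate induced graph
  have build : ∀ v ∈ G.B ∪ G.W, v ∉ S → v ∉ T →
      Bisize (induce G ((G.B ∪ G.W).erase v)) p := by
    intro v _ hvS hvT
    refine ⟨S, T, ⟨?_, ?_, ?_⟩, hS, hT⟩
    · intro x hx
      exact Finset.mem_inter.mpr ⟨hSB hx, Finset.mem_erase.mpr
        ⟨fun h => hvS (h ▸ hx), Finset.mem_union_left _ (hSB hx)⟩⟩
    · intro x hx
      exact Finset.mem_inter.mpr ⟨hTW hx, Finset.mem_erase.mpr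
        ⟨fun h => hvT (h ▸ hx), Finset.mem_union_right _ (hTW hx)⟩⟩
    · intro x hx y hy
      refine ⟨hE x hx y hy, ?_, ?_⟩
      · exact Finset.mem_erase.mpr ⟨fun h => hvS (h ▸ hx), Finset.mem_union_left _ (hSB hx)⟩
      · exact Finset.mem_erase.mpr ⟨fun h => hvT (h ▸ hy), Finset.mem_union_right _ (hTW hy)⟩
  rcases key with hbS | hwT
  · have hbT : b ∉ T := fun h => (Finset.disjoint_left.mp G.disj hb) (hTW h)
    exact Or.inl (build b (Finset.mem_union_left _ hb) hbS hbT)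
  · have hwS : w ∉ S := fun h => (Finset.disjoint_left.mp G.disj.symm hw) (hSB h)
    exact Or.inr (build w (Finset.mem_union_right _ hw) hwS hwT)

end AuxLemmas

/-- Theorem 20 of the paper, in the generality of its proof. -/
theorem maxbisize_remove_nonadjacent_pair {V : Type} [DecidableEq V] (G : BipGraph V)
    (b w : V) (hb : b ∈ G.B) (hw : w ∈ G.W) (hbw : (b, w) ∉ G.E) :
    DD G = Dom (DD (induce G ((G.B ∪ G.W).erase b)) ∪
                DD (induce G ((G.B ∪ G.W).erase w))) := by
  ext p
  constructor
  · rintro ⟨hpb, hpmax⟩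
    have step : ∀ (M : Finset V), Bisize (induce G M) p → MaxBisize (induce G M) p :=
      fun M hm => ⟨hm, fun q hq hd => hpmax q (bisize_induce hq) hd⟩
    have hmem : p ∈ DD (induce G ((G.B ∪ G.W).erase b)) ∪
        DD (induce G ((G.B ∪ G.W).erase w)) := by
      rcases bisize_split hb hw hbw hpb with h | h
      · exact Or.inl (step _ h)
      · exact Or.inr (step _ h)
    refine ⟨hmem, fun q hq hd => ?_⟩
    rcases hq with hq | hq
    · exact hpmax q (bisize_induce hq.1) hd
    · exact hpmax q (bisize_induce hq.1) hd
  · rintro ⟨hmem, hdom⟩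
    have hpb : Bisize G p := by
      rcases hmem with h | h
      · exact bisize_induce h.1
      · exact bisize_induce h.1
    refine ⟨hpb, fun q hq hd => ?_⟩
    rcases bisize_split hb hw hbw hq with h | h
    · obtain ⟨m, hm, h1, h2⟩ := exists_maxbisize h
      have hmp : m = p := hdom m (Or.inl hm) ⟨le_trans hd.1 h1, le_trans hd.2 h2⟩
      rw [hmp] at h1 h2
      obtain ⟨hd1, hd2⟩ := hd
      exact Prod.ext (le_antisymm h1 hd1) (le_antisymm h2 hd2)
    · obtain ⟨m, hm, h1, h2⟩ := exists_maxbisize h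
      have hmp : m = p := hdom m (Or.inr hm) ⟨le_trans hd.1 h1, le_trans hd.2 h2⟩
      rw [hmp] at h1 h2
      obtain ⟨hd1, hd2⟩ := hd
      exact Prod.ext (le_antisymm h1 hd1) (le_antisymm h2 hd2)
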